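/- Let A be a formally real integral domain which is an ℝ-algebra, let I₀ be an imaginary unit, and let f, h ∈ Quaternion A \ {0} be such that f * h is I₀-sliced but not scalar and h * f is I₀-sliced but not scalar. Then either f and h are both I₀-sliced, or there exist imaginary units J₀, K₀ whose vector parts are orthogonal to that of I₀ in ℝ³ and nonzero I₀-sliced elements f̃, h̃ ∈ Quaternion A with f = f̃ * ι(K₀) and h = ι(J₀) * h̃. (Theorem 6.1, case (i).) -/

import Mathlib

open Quaternion

/-- The componentwise extension `ι : ℍ[ℝ] → ℍ[A]` of `algebraMap ℝ A`. -/
noncomputable def qmap {A : Type*} [CommRing A] [Algebra ℝ A] (q : Quaternion ℝ) :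
    Quaternion A :=
  ⟨algebraMap ℝ A q.re, algebraMap ℝ A q.imI, algebraMap ℝ A q.imJ, algebraMap ℝ A q.imK⟩

/-- An imaginary unit: a real quaternion with zero real part squaring to `-1`. -/
def IsImaginaryUnit (I : Quaternion ℝ) : Prop := I.re = 0 ∧ I ^ 2 = -1

/-- `q` is `I`-sliced if `q = a + b·ι(I)` for some `a, b ∈ A`. -/
noncomputable def IsSliced {A : Type*} [CommRing A] [Algebra ℝ A]
    (I : Quaternion ℝ) (q : Quaternion A) : Prop :=
  ∃ a b : A, q = (a : Quaternion A) + (b : Quaternion A) * qmap I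

/-- The vector parts of `I` and `M` are orthogonal in `ℝ³`. -/
def OrthIm (I M : Quaternion ℝ) : Prop :=
  I.imI * M.imI + I.imJ * M.imJ + I.imK * M.imK = 0

/-- `A` is formally real: a sum of four squares vanishes only trivially. -/
def FormallyRealFour (A : Type*) [CommRing A] : Prop :=
  ∀ a b c d : A, a ^ 2 + b ^ 2 + c ^ 2 + d ^ 2 = 0 → a = 0 ∧ b = 0 ∧ c = 0 ∧ d = 0

/-- `q` is scalar if its vector part vanishes. -/
def IsScalarQ {A : Type*} [CommRing A] (q : Quaternion A) : Prop := q.im = 0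

/-- Helper constructor landing in `Quaternion R`. -/
def qmk {R : Type*} [CommRing R] (a b c d : R) : Quaternion R := ⟨a, b, c, d⟩

section Qmk
variable {R : Type*} [CommRing R]

@[simp] lemma qmk_re (a b c d : R) : (qmk a b c d).re = a := rfl
@[simp] lemma qmk_imI (a b c d : R) : (qmk a b c d).imI = b := rfl
@[simp] lemma qmk_imJ (a b c d : R) : (qmk a b c d).imJ = c := rfl
@[simp] lemma qmk_imK (a b c d : R) : (qmk a b c d).imK = d := rfl

lemma qmk_eq_zero {a b c d : R} :
    qmk a b c d = 0 ↔ a = 0 ∧ b = 0 ∧ c = 0 ∧ d = 0 := by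
  constructor
  · intro h0
    exact ⟨congrArg QuaternionAlgebra.re h0, congrArg QuaternionAlgebra.imI h0,
      congrArg QuaternionAlgebra.imJ h0, congrArg QuaternionAlgebra.imK h0⟩
  · rintro ⟨rfl, rfl, rfl, rfl⟩
    ext <;> simp

lemma eq_qmk (q : Quaternion R) : q = qmk q.re q.imI q.imJ q.imK := by ext <;> simp

end Qmk

section Aux
variable {A : Type*} [CommRing A] [Algebra ℝ A]

@[simp] lemma qmap_re (q : Quaternion ℝ) :
    (qmap q : Quaternion A).re = algebraMap ℝ A q.re := rfl
@[simp] lemma qmap_imI (q : Quaternion ℝ) :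
    (qmap q : Quaternion A).imI = algebraMap ℝ A q.imI := rfl
@[simp] lemma qmap_imJ (q : Quaternion ℝ) :
    (qmap q : Quaternion A).imJ = algebraMap ℝ A q.imJ := rfl
@[simp] lemma qmap_imK (q : Quaternion ℝ) :
    (qmap q : Quaternion A).imK = algebraMap ℝ A q.imK := rfl

lemma qmap_mul (p q : Quaternion ℝ) : (qmap (p * q) : Quaternion A) = qmap p * qmap q := by
  ext <;>
    simp [Quaternion.re_mul, Quaternion.imI_mul, Quaternion.imJ_mul, Quaternion.imK_mul,
      map_add, map_sub, map_mul]

lemma qmap_one : (qmap 1 : Quaternion A) = 1 := by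
  ext <;> simp

lemma sliced_i_iff {q : Quaternion A} :
    IsSliced (qmk 0 1 0 0) q ↔ q.imJ = 0 ∧ q.imK = 0 := by
  have hrepr : ∀ a b : A, (a : Quaternion A) + (b : Quaternion A) * qmap (qmk 0 1 0 0)
      = qmk a b 0 0 := by
    intro a b
    ext <;>
      simp [Quaternion.re_mul, Quaternion.imI_mul, Quaternion.imJ_mul, Quaternion.imK_mul]
  constructor
  · rintro ⟨a, b, rfl⟩
    rw [hrepr]
    exact ⟨rfl, rfl⟩
  · rintro ⟨h1, h2⟩
    refine ⟨q.re, q.imI, ?_⟩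
    rw [hrepr]
    ext <;> simp [h1, h2]

omit [Algebra ℝ A] in
lemma isScalarQ_iff {q : Quaternion A} :
    IsScalarQ q ↔ q.imI = 0 ∧ q.imJ = 0 ∧ q.imK = 0 := by
  unfold IsScalarQ
  constructor
  · intro h
    refine ⟨?_, ?_, ?_⟩
    · rw [← Quaternion.imI_im q, h]; rfl
    · rw [← Quaternion.imJ_im q, h]; rfl
    · rw [← Quaternion.imK_im q, h]; rfl
  · rintro ⟨h1, h2, h3⟩
    ext <;> simp [h1, h2, h3]

omit [Algebra ℝ A] in
lemma isScalarQ_iff' {q : Quaternion A} :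
    IsScalarQ q ↔ ∃ a : A, q = (a : Quaternion A) := by
  constructor
  · intro h
    refine ⟨q.re, ?_⟩
    conv_lhs => rw [← Quaternion.re_add_im q]
    rw [h, add_zero]
  · rintro ⟨a, rfl⟩
    rw [IsScalarQ]; simp

end Aux

lemma two_sq {A : Type*} [CommRing A] (hFR : FormallyRealFour A) {a b : A}
    (h : a ^ 2 + b ^ 2 = 0) : a = 0 ∧ b = 0 := by
  have := hFR a b 0 0 (by linear_combination h)
  exact ⟨this.1, this.2.1⟩

lemma core {A : Type*} [CommRing A] [IsDomain A] [Algebra ℝ A] (hFR : FormallyRealFour A)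
    (f h : Quaternion A) (hf : f ≠ 0) (hh : h ≠ 0)
    (hfh : IsSliced (qmk 0 1 0 0) (f * h)) (hfh' : ¬ IsScalarQ (f * h))
    (hhf : IsSliced (qmk 0 1 0 0) (h * f)) (hhf' : ¬ IsScalarQ (h * f)) :
    (IsSliced (qmk 0 1 0 0) f ∧ IsSliced (qmk 0 1 0 0) h) ∨
      ∃ J₀ K₀ : Quaternion ℝ, IsImaginaryUnit J₀ ∧ IsImaginaryUnit K₀ ∧
        OrthIm (qmk 0 1 0 0) J₀ ∧ OrthIm (qmk 0 1 0 0) K₀ ∧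
        ∃ ft ht : Quaternion A, IsSliced (qmk 0 1 0 0) ft ∧ ft ≠ 0 ∧
          IsSliced (qmk 0 1 0 0) ht ∧ ht ≠ 0 ∧
          f = ft * qmap K₀ ∧ h = qmap J₀ * ht := by
  set a := f.re with ha'
  set b := f.imI with hb'
  set c := f.imJ with hc'
  set d := f.imK with hd'
  set w := h.re with hw'
  set x := h.imI with hx'
  set y := h.imJ with hy'
  set z := h.imK with hz'
  have e1 : a * y - b * z + c * w + d * x = 0 := by
    have := (sliced_i_iff.mp hfh).1; rwa [Quaternion.imJ_mul] at this
  have e2 : a * z + b * y - c * x + d * w = 0 := by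
    have := (sliced_i_iff.mp hfh).2; rwa [Quaternion.imK_mul] at this
  have e3 : w * c - x * d + y * a + z * b = 0 := by
    have := (sliced_i_iff.mp hhf).1; rwa [Quaternion.imJ_mul] at this
  have e4 : w * d + x * c - y * b + z * a = 0 := by
    have := (sliced_i_iff.mp hhf).2; rwa [Quaternion.imK_mul] at this
  have e5 : a * x + b * w + c * z - d * y ≠ 0 := by
    intro h0
    refine hfh' (isScalarQ_iff.mpr ⟨?_, (sliced_i_iff.mp hfh).1, (sliced_i_iff.mp hfh).2⟩)
    rw [Quaternion.imI_mul]; exact h0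
  by_cases hcd : c = 0 ∧ d = 0
  · obtain ⟨hc0, hd0⟩ := hcd
    rw [hc0, hd0] at e3 e4
    have key : (y ^ 2 + z ^ 2) * (a ^ 2 + b ^ 2) = 0 := by
      linear_combination (y * a + z * b) * e3 + (z * a - y * b) * e4
    rcases mul_eq_zero.mp key with h0 | h0
    · obtain ⟨hy0, hz0⟩ := two_sq hFR h0
      exact Or.inl ⟨sliced_i_iff.mpr ⟨hc0, hd0⟩, sliced_i_iff.mpr ⟨hy0, hz0⟩⟩
    · obtain ⟨ha0, hb0⟩ := two_sq hFR h0
      exact absurd (by ext <;> simp [← ha', ← hb', ← hc', ← hd', ha0, hb0, hc0, hd0]) hf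
  · have hcd2 : c ^ 2 + d ^ 2 ≠ 0 := fun h0 => hcd (two_sq hFR h0)
    have hyz : ¬ (y = 0 ∧ z = 0) := by
      rintro ⟨hy0, hz0⟩
      rw [hy0, hz0] at e1 e2
      have key : (c ^ 2 + d ^ 2) * (w ^ 2 + x ^ 2) = 0 := by
        linear_combination (c * w + d * x) * e1 + (d * w - c * x) * e2
      obtain ⟨hw0, hx0⟩ := two_sq hFR ((mul_eq_zero.mp key).resolve_left hcd2)
      exact hh (by ext <;> simp [← hw', ← hx', ← hy', ← hz', hw0, hx0, hy0, hz0])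
    have h2 : (2 : A) ≠ 0 := by
      intro h0
      have : (2 : ℝ) = 0 := (algebraMap ℝ A).injective (by rw [map_ofNat, map_zero, h0])
      norm_num at this
    have hat : a * (z * c - y * d) = 0 := by
      have h0 : 2 * (a * (z * c - y * d)) = 0 := by
        linear_combination (-d) * e1 + c * e2 + (-d) * e3 + c * e4
      exact (mul_eq_zero.mp h0).resolve_left h2
    have hbt : b * (z * c - y * d) = 0 := by
      have h0 : 2 * (b * (z * c - y * d)) = 0 := by
        linear_combination (-c) * e1 + (-d) * e2 + c * e3 + d * e4
      exact (mul_eq_zero.mp h0).resolve_left h2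
    have tab : (z * c - y * d) * (a ^ 2 + b ^ 2) = 0 := by
      linear_combination a * hat + b * hbt
    rcases mul_eq_zero.mp tab with ht0 | hab0
    · exfalso
      apply e5
      have h0 : (c ^ 2 + d ^ 2) * (a * x + b * w + c * z - d * y) = 0 := by
        linear_combination (c * a + d * b) * e4 + (c * b - d * a) * e3 +
          (c ^ 2 + d ^ 2 - a ^ 2 - b ^ 2) * ht0
      exact (mul_eq_zero.mp h0).resolve_left hcd2
    · obtain ⟨ha0, hb0⟩ := two_sq hFR hab0
      rw [ha0, hb0] at e1 e2
      have key3 : (c ^ 2 + d ^ 2) * (w ^ 2 + x ^ 2) = 0 := by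
        linear_combination (c * w + d * x) * e1 + (d * w - c * x) * e2
      obtain ⟨hw0, hx0⟩ := two_sq hFR ((mul_eq_zero.mp key3).resolve_left hcd2)
      right
      have hju : IsImaginaryUnit (qmk 0 0 1 0) := by
        refine ⟨rfl, ?_⟩
        rw [sq]
        ext <;> simp [Quaternion.re_mul, Quaternion.imI_mul, Quaternion.imJ_mul,
          Quaternion.imK_mul]
      have horth : OrthIm (qmk 0 1 0 0) (qmk 0 0 1 0) := by
        simp [OrthIm]
      refine ⟨qmk 0 0 1 0, qmk 0 0 1 0, hju, hju, horth, horth,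
        qmk c d 0 0, qmk y (-z) 0 0, sliced_i_iff.mpr ⟨rfl, rfl⟩, ?_,
        sliced_i_iff.mpr ⟨rfl, rfl⟩, ?_, ?_, ?_⟩
      · intro h0
        obtain ⟨hh1, hh2, -, -⟩ := qmk_eq_zero.mp h0
        exact hcd ⟨hh1, hh2⟩
      · intro h0
        obtain ⟨hh1, hh2, -, -⟩ := qmk_eq_zero.mp h0
        exact hyz ⟨hh1, neg_eq_zero.mp hh2⟩
      · ext <;>
          simp [← ha', ← hb', ← hc', ← hd', ha0, hb0, Quaternion.re_mul, Quaternion.imI_mul,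
            Quaternion.imJ_mul, Quaternion.imK_mul]
      · ext <;>
          simp [← hw', ← hx', ← hy', ← hz', hw0, hx0, Quaternion.re_mul, Quaternion.imI_mul,
            Quaternion.imJ_mul, Quaternion.imK_mul]

section Reduction

lemma re_mul_comm (p q : Quaternion ℝ) : (p * q).re = (q * p).re := by
  rw [Quaternion.re_mul, Quaternion.re_mul]; ring

lemma orthIm_iff {p q : Quaternion ℝ} : OrthIm p q ↔ (p * q).re = p.re * q.re := by
  unfold OrthIm
  rw [Quaternion.re_mul]
  constructor <;> intro h0 <;> linarith

lemma conj_re_zero {u p : Quaternion ℝ} (hu : u ≠ 0) (hp : p.re = 0) :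
    (u * p * u⁻¹).re = 0 := by
  rw [re_mul_comm, ← mul_assoc, inv_mul_cancel₀ hu, one_mul, hp]

lemma imunit_conj {u p : Quaternion ℝ} (hu : u ≠ 0) (hp : IsImaginaryUnit p) :
    IsImaginaryUnit (u * p * u⁻¹) := by
  refine ⟨conj_re_zero hu hp.1, ?_⟩
  have hpp : p * p = -1 := by rw [← sq]; exact hp.2
  rw [sq]
  simp only [mul_assoc]
  rw [inv_mul_cancel_left₀ hu, ← mul_assoc p p, hpp, neg_one_mul, mul_neg,
    mul_inv_cancel₀ hu]

lemma orth_conj {u p q : Quaternion ℝ} (hu : u ≠ 0) (hp : p.re = 0) (hq : q.re = 0)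
    (hpq : OrthIm p q) : OrthIm (u * p * u⁻¹) (u * q * u⁻¹) := by
  have hp' := conj_re_zero hu hp
  have hq' := conj_re_zero hu hq
  have hmul : (u * p * u⁻¹) * (u * q * u⁻¹) = u * (p * q) * u⁻¹ := by
    simp only [mul_assoc]
    rw [inv_mul_cancel_left₀ hu]
  refine orthIm_iff.mpr ?_
  rw [hp', hq', mul_zero, hmul, re_mul_comm, ← mul_assoc, inv_mul_cancel₀ hu, one_mul,
    orthIm_iff.mp hpq, hp, hq, mul_zero]

lemma sliced_conj {A : Type*} [CommRing A] [Algebra ℝ A] {P Q : Quaternion ℝ}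
    {X Y : Quaternion A} (hXY : X * Y = 1) (hPQ : X * qmap P * Y = qmap Q)
    (q : Quaternion A) (hq : IsSliced P q) : IsSliced Q (X * q * Y) := by
  obtain ⟨α, β, rfl⟩ := hq
  refine ⟨α, β, ?_⟩
  rw [mul_add, add_mul]
  congr 1
  · rw [← Quaternion.coe_commutes, mul_assoc, hXY, mul_one]
  · rw [← hPQ, ← mul_assoc, ← Quaternion.coe_commutes]
    simp only [mul_assoc]

end Reduction

theorem two_sided_products_sliced_case_same_slice
    {A : Type*} [CommRing A] [IsDomain A] [Algebra ℝ A] (hFR : FormallyRealFour A)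
    (I₀ : Quaternion ℝ) (hI₀ : IsImaginaryUnit I₀)
    (f h : Quaternion A) (hf : f ≠ 0) (hh : h ≠ 0)
    (hfh : IsSliced I₀ (f * h)) (hfh' : ¬ IsScalarQ (f * h))
    (hhf : IsSliced I₀ (h * f)) (hhf' : ¬ IsScalarQ (h * f)) :
    (IsSliced I₀ f ∧ IsSliced I₀ h) ∨
      ∃ J₀ K₀ : Quaternion ℝ, IsImaginaryUnit J₀ ∧ IsImaginaryUnit K₀ ∧
        OrthIm I₀ J₀ ∧ OrthIm I₀ K₀ ∧
        ∃ ft ht : Quaternion A, IsSliced I₀ ft ∧ ft ≠ 0 ∧ IsSliced I₀ ht ∧ ht ≠ 0 ∧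
          f = ft * qmap K₀ ∧ h = qmap J₀ * ht := by
  obtain ⟨hre, hsq⟩ := hI₀
  have hsq' : I₀ * I₀ = -1 := by rw [← sq]; exact hsq
  have hii : (qmk 0 1 0 0 : Quaternion ℝ) * qmk 0 1 0 0 = -1 := by
    ext <;> simp [Quaternion.re_mul, Quaternion.imI_mul, Quaternion.imJ_mul,
      Quaternion.imK_mul]
  have hu : ∃ u : Quaternion ℝ, u ≠ 0 ∧ u * qmk 0 1 0 0 = I₀ * u := by
    by_cases hca : I₀ = -(qmk 0 1 0 0)
    · refine ⟨qmk 0 0 1 0, ?_, ?_⟩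
      · intro h0
        have := congrArg QuaternionAlgebra.imJ h0
        simp at this
      · rw [hca]
        ext <;> simp [Quaternion.re_mul, Quaternion.imI_mul, Quaternion.imJ_mul,
          Quaternion.imK_mul]
    · refine ⟨qmk 0 1 0 0 + I₀, fun h0 => hca (eq_neg_of_add_eq_zero_right h0), ?_⟩
      rw [add_mul, mul_add, hii, hsq']
      exact add_comm _ _
  obtain ⟨u, hu0, huc⟩ := hu
  have hIu : I₀ = u * qmk 0 1 0 0 * u⁻¹ := by
    rw [huc, mul_assoc, mul_inv_cancel₀ hu0, mul_one]
  set U : Quaternion A := qmap u with hU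
  set V : Quaternion A := qmap u⁻¹ with hV
  have hUV : U * V = 1 := by rw [hU, hV, ← qmap_mul, mul_inv_cancel₀ hu0, qmap_one]
  have hVU : V * U = 1 := by rw [hU, hV, ← qmap_mul, inv_mul_cancel₀ hu0, qmap_one]
  have hUV' : ∀ t : Quaternion A, U * (V * t) = t := fun t => by
    rw [← mul_assoc, hUV, one_mul]
  have hVU' : ∀ t : Quaternion A, V * (U * t) = t := fun t => by
    rw [← mul_assoc, hVU, one_mul]
  have hImap : (qmap I₀ : Quaternion A) = U * qmap (qmk 0 1 0 0) * V := by
    rw [hIu, qmap_mul, qmap_mul, hU, hV]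
  have hqiV : V * qmap I₀ * U = (qmap (qmk 0 1 0 0) : Quaternion A) := by
    rw [hImap]
    simp only [mul_assoc]
    rw [hVU', hVU, mul_one]
  have cancelVU : ∀ q : Quaternion A, U * (V * q * U) * V = q := by
    intro q
    simp only [mul_assoc]
    rw [hUV, mul_one, hUV']
  have cancelUV : ∀ q : Quaternion A, V * (U * q * V) * U = q := by
    intro q
    simp only [mul_assoc]
    rw [hVU, mul_one, hVU']
  have scalT : ∀ q : Quaternion A, IsScalarQ (V * q * U) → IsScalarQ q := by
    intro q hq
    obtain ⟨r, hr⟩ := isScalarQ_iff'.mp hq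
    refine isScalarQ_iff'.mpr ⟨r, ?_⟩
    rw [← cancelVU q, hr, ← Quaternion.coe_commutes, mul_assoc, hUV, mul_one]
  have nzT : ∀ q : Quaternion A, q ≠ 0 → V * q * U ≠ 0 := by
    intro q hq h0
    apply hq
    rw [← cancelVU q, h0, mul_zero, zero_mul]
  have hprod : ∀ p q : Quaternion A, (V * p * U) * (V * q * U) = V * (p * q) * U := by
    intro p q
    simp only [mul_assoc]
    rw [hUV']
  rcases core hFR (V * f * U) (V * h * U) (nzT f hf) (nzT h hh)
      (by rw [hprod]; exact sliced_conj hVU hqiV _ hfh)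
      (by rw [hprod]; intro hs; exact hfh' (scalT _ hs))
      (by rw [hprod]; exact sliced_conj hVU hqiV _ hhf)
      (by rw [hprod]; intro hs; exact hhf' (scalT _ hs)) with
    hcase | hcase
  · obtain ⟨sf, sh⟩ := hcase
    left
    constructor
    · have := sliced_conj hUV hImap.symm _ sf
      rwa [cancelVU f] at this
    · have := sliced_conj hUV hImap.symm _ sh
      rwa [cancelVU h] at this
  · obtain ⟨J', K', hJ', hK', oJ', oK', ft', ht', sft', nft', sht', nht', hfe, hhe⟩ := hcase
    right
    have hqi_re : (qmk 0 1 0 0 : Quaternion ℝ).re = 0 := rfl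
    refine ⟨u * J' * u⁻¹, u * K' * u⁻¹, imunit_conj hu0 hJ', imunit_conj hu0 hK',
      ?_, ?_, U * ft' * V, U * ht' * V, ?_, ?_, ?_, ?_, ?_, ?_⟩
    · rw [hIu]
      exact orth_conj hu0 hqi_re hJ'.1 oJ'
    · rw [hIu]
      exact orth_conj hu0 hqi_re hK'.1 oK'
    · exact sliced_conj hUV hImap.symm _ sft'
    · intro h0
      apply nft'
      rw [← cancelUV ft', h0, mul_zero, zero_mul]
    · exact sliced_conj hUV hImap.symm _ sht'
    · intro h0
      apply nht'
      rw [← cancelUV ht', h0, mul_zero, zero_mul]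
    · calc f = U * (V * f * U) * V := (cancelVU f).symm
        _ = U * (ft' * qmap K') * V := by rw [hfe]
        _ = (U * ft' * V) * (U * qmap K' * V) := by
            simp only [mul_assoc]
            rw [hVU']
        _ = (U * ft' * V) * qmap (u * K' * u⁻¹) := by rw [qmap_mul, qmap_mul, hU, hV]
    · calc h = U * (V * h * U) * V := (cancelVU h).symm
        _ = U * (qmap J' * ht') * V := by rw [hhe]
        _ = (U * qmap J' * V) * (U * ht' * V) := by
            simp only [mul_assoc]
            rw [hVU']
        _ = qmap (u * J' * u⁻¹) * (U * ht' * V) := by rw [qmap_mul, qmap_mul, hU, hV]
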